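/- arXiv:2012.05721 — 7 statements merged into one kernel-verified Lean document; each statement's English description precedes it below -/
import Mathlib

section
/- Let R be a commutative ring and let x, h ∈ R satisfy x^2 = -4·h·x - 4·h^2. Then for every natural number k ≥ 1 one has x^k = (-1)^(k-1) · ( k·2^(k-1)·h^(k-1)·x + (k-1)·2^k·h^k ). -/
theorem aux_pow {R : Type*} [CommRing R] (x h : R)
    (hx : x ^ 2 = -4 * h * x - 4 * h ^ 2) :
    ∀ n : ℕ, x ^ (n + 1) = (-1 : R) ^ n *
      ((n + 1 : R) * 2 ^ n * h ^ n * x + (n : R) * 2 ^ (n + 1) * h ^ (n + 1)) := by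
  intro n
  induction n with
  | zero => simp
  | succ m ih =>
    rw [pow_succ, ih]
    push_cast
    linear_combination ((-1:R)^m*((m:R)+1)*2^m*h^m) * hx

/-- Powers of an element `x` of a commutative ring satisfying the quadratic
relation `x^2 = -4*h*x - 4*h^2`. -/
theorem stmt_0 {R : Type*} [CommRing R] (x h : R)
    (hx : x ^ 2 = -4 * h * x - 4 * h ^ 2) :
    ∀ k : ℕ, 1 ≤ k →
      x ^ k = (-1 : R) ^ (k - 1) *
        ((k : R) * 2 ^ (k - 1) * h ^ (k - 1) * x + ((k - 1 : ℕ) : R) * 2 ^ k * h ^ k) := by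
  intro k hk
  obtain ⟨n, rfl⟩ := Nat.exists_eq_add_of_le hk
  simp only [Nat.add_sub_cancel, Nat.add_sub_cancel_left]
  have := aux_pow x h hx n
  rw [show 1 + n = n + 1 by ring]
  simpa [add_comm] using this
end

section
/- Let λ ∈ ℂ, let x ∈ ℂ with x ≠ 0, let p ≥ 1 and q ≥ 0 be natural numbers, and let 0 < r < |x|. Then (2πi)⁻¹ · ∮_{|y|=r} e^(λy) · y^(-p) · (x+y)^(-q) dy = Σ_{j=0}^{p-1} (-q)^{\underline{j}} · λ^(p-1-j) / (j! · (p-1-j)!) · x^(-(q+j)). -/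
open Complex Finset

noncomputable def resCoeff (lam : ℂ) (q n j : ℕ) : ℂ :=
  (n.choose j : ℂ) * (descPochhammer ℂ j).eval (-(q : ℂ)) * lam ^ (n - j)

lemma hasDerivAt_aux (lam x : ℂ) (m : ℤ) (y : ℂ) (h : x + y ≠ 0) :
    HasDerivAt (fun y => Complex.exp (lam * y) * (x + y) ^ m)
      (lam * (Complex.exp (lam * y) * (x + y) ^ m)
        + (m : ℂ) * (Complex.exp (lam * y) * (x + y) ^ (m - 1))) y := by
  have h1 : HasDerivAt (fun y : ℂ => Complex.exp (lam * y)) (Complex.exp (lam * y) * lam) y := by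
    simpa using ((hasDerivAt_id y).const_mul lam).cexp
  have h2 : HasDerivAt (fun y : ℂ => (x + y) ^ m) ((m : ℂ) * (x + y) ^ (m - 1)) y := by
    simpa [Function.comp_def] using (hasDerivAt_zpow m (x + y) (Or.inl h)).comp y
      ((hasDerivAt_const y x).add (hasDerivAt_id y))
  have := h1.fun_mul h2
  refine this.congr_deriv ?_
  ring

lemma iter_formula (lam x : ℂ) (q : ℕ) :
    ∀ (n : ℕ) (y : ℂ), x + y ≠ 0 →
    iteratedDeriv n (fun y => Complex.exp (lam * y) * (x + y) ^ (-(q : ℤ))) y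
      = ∑ j ∈ Finset.range (n + 1),
          resCoeff lam q n j * (Complex.exp (lam * y) * (x + y) ^ (-((q : ℤ) + j))) := by
  intro n
  induction n with
  | zero =>
      intro y hy
      simp [resCoeff]
  | succ n ih =>
      intro y hy
      rw [iteratedDeriv_succ]
      have hopen : IsOpen {z : ℂ | x + z ≠ 0} :=
        isOpen_compl_singleton.preimage (continuous_const.add continuous_id)
      have hEq : iteratedDeriv n (fun y => Complex.exp (lam * y) * (x + y) ^ (-(q : ℤ)))
          =ᶠ[nhds y] fun z => ∑ j ∈ Finset.range (n + 1),
            resCoeff lam q n j * (Complex.exp (lam * z) * (x + z) ^ (-((q : ℤ) + j))) := by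
        filter_upwards [hopen.mem_nhds hy] with z hz using ih z hz
      rw [hEq.deriv_eq]
      have hd : HasDerivAt (fun z => ∑ j ∈ Finset.range (n + 1),
            resCoeff lam q n j * (Complex.exp (lam * z) * (x + z) ^ (-((q : ℤ) + j))))
          (∑ j ∈ Finset.range (n + 1), resCoeff lam q n j *
            (lam * (Complex.exp (lam * y) * (x + y) ^ (-((q : ℤ) + j)))
              + ((-((q : ℤ) + j) : ℤ) : ℂ) *
                (Complex.exp (lam * y) * (x + y) ^ (-((q : ℤ) + j) - 1)))) y := by
        apply HasDerivAt.fun_sum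
        intro j _
        exact (hasDerivAt_aux lam x (-((q : ℤ) + j)) y hy).const_mul _
      rw [hd.deriv]
      -- now the combinatorial identity
      have hw : ∀ j : ℕ, (x + y) ^ (-((q : ℤ) + j) - 1) = (x + y) ^ (-((q : ℤ) + (j + 1 : ℕ))) := by
        intro j
        congr 1
        push_cast
        ring
      calc
        ∑ j ∈ Finset.range (n + 1), resCoeff lam q n j *
            (lam * (Complex.exp (lam * y) * (x + y) ^ (-((q : ℤ) + j)))
              + ((-((q : ℤ) + j) : ℤ) : ℂ) *
                (Complex.exp (lam * y) * (x + y) ^ (-((q : ℤ) + j) - 1)))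
          = (∑ j ∈ Finset.range (n + 1), resCoeff lam q n j * lam *
              (Complex.exp (lam * y) * (x + y) ^ (-((q : ℤ) + j))))
            + ∑ j ∈ Finset.range (n + 1), resCoeff lam q n j * (-(q : ℂ) - j) *
              (Complex.exp (lam * y) * (x + y) ^ (-((q : ℤ) + (j + 1 : ℕ)))) := by
            rw [← Finset.sum_add_distrib]
            refine Finset.sum_congr rfl fun j _ => ?_
            rw [hw j]
            push_cast
            ring
        _ = ∑ j ∈ Finset.range (n + 2),
              resCoeff lam q (n + 1) j * (Complex.exp (lam * y) * (x + y) ^ (-((q : ℤ) + j))) := by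
            rw [Finset.sum_range_succ' (fun j => resCoeff lam q (n + 1) j *
              (Complex.exp (lam * y) * (x + y) ^ (-((q : ℤ) + j))))]
            rw [Finset.sum_range_succ' (fun j => resCoeff lam q n j * lam *
              (Complex.exp (lam * y) * (x + y) ^ (-((q : ℤ) + j))))]
            have h0 : resCoeff lam q (n + 1) 0 = resCoeff lam q n 0 * lam := by
              simp [resCoeff, pow_succ]
            have hext : ∑ i ∈ Finset.range n, resCoeff lam q n (i + 1) * lam *
                  (Complex.exp (lam * y) * (x + y) ^ (-((q : ℤ) + (i + 1 : ℕ))))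
                = ∑ i ∈ Finset.range (n + 1), resCoeff lam q n (i + 1) * lam *
                  (Complex.exp (lam * y) * (x + y) ^ (-((q : ℤ) + (i + 1 : ℕ)))) := by
              rw [Finset.sum_range_succ]
              have hz : resCoeff lam q n (n + 1) = 0 := by
                simp [resCoeff, Nat.choose_succ_self]
              rw [hz]
              ring
            rw [hext, h0, add_right_comm]
            congr 1
            rw [← Finset.sum_add_distrib]
            refine Finset.sum_congr rfl fun k hk => ?_
            have hk' : k ≤ n := Nat.lt_succ_iff.mp (Finset.mem_range.mp hk)
            have hP : (descPochhammer ℂ (k + 1)).eval (-(q : ℂ))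
                = (descPochhammer ℂ k).eval (-(q : ℂ)) * (-(q : ℂ) - k) := by
              rw [descPochhammer_succ_eval]
            have hchoose : (((n + 1).choose (k + 1) : ℕ) : ℂ)
                = (n.choose k : ℂ) + (n.choose (k + 1) : ℂ) := by
              exact_mod_cast Nat.choose_succ_succ n k
            rcases eq_or_lt_of_le hk' with h | h
            · subst h
              simp only [resCoeff, Nat.choose_succ_self, Nat.choose_self, hP,
                Nat.sub_self, Nat.cast_zero, Nat.cast_one, pow_zero]
              push_cast
              ring
            · have e1 : n + 1 - (k + 1) = n - k := by omega
              have e2 : n - k = n - (k + 1) + 1 := by omega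
              simp only [resCoeff, hP, hchoose, e1, e2, pow_succ]
              push_cast
              ring

/-- The residue at `y = 0` of `e^(λy) / (y^p (x+y)^q)`. -/
theorem stmt_6 (lam x : ℂ) (hx : x ≠ 0) (p q : ℕ) (hp : 1 ≤ p)
    (r : ℝ) (hr0 : 0 < r) (hrx : r < ‖x‖) :
    (2 * Real.pi * Complex.I)⁻¹ *
        (∮ y in C(0, r), Complex.exp (lam * y) * y ^ (-(p : ℤ)) * (x + y) ^ (-(q : ℤ)))
      = ∑ j ∈ Finset.range p,
          (descPochhammer ℂ j).eval (-(q : ℂ)) * lam ^ (p - 1 - j)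
            / ((j.factorial : ℂ) * ((p - 1 - j).factorial : ℂ))
            * x ^ (-((q : ℤ) + (j : ℤ))) := by
  set g : ℂ → ℂ := fun y => Complex.exp (lam * y) * (x + y) ^ (-(q : ℤ)) with hg
  have hne : ∀ y : ℂ, ‖y‖ ≤ r → x + y ≠ 0 := by
    intro y hy h
    have hyx : y = -x := eq_neg_of_add_eq_zero_right h
    rw [hyx, norm_neg] at hy
    exact absurd hy (not_le.mpr hrx)
  have hdiff : DifferentiableOn ℂ g (Metric.closedBall (0 : ℂ) r) := by
    intro y hy
    have hy' : ‖y‖ ≤ r := by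
      simpa [Metric.mem_closedBall, Complex.dist_eq] using hy
    exact (((differentiableAt_id.const_mul lam).cexp).mul
      (((differentiableAt_const x).add differentiableAt_id).zpow
        (Or.inl (hne y hy')))).differentiableWithinAt
  set R : NNReal := ⟨r, hr0.le⟩ with hR
  have hps : HasFPowerSeriesOnBall g (cauchyPowerSeries g 0 R) 0 R :=
    DifferentiableOn.hasFPowerSeriesOnBall (by exact hdiff) hr0
  have hfs := hps.factorial_smul (y := (1 : ℂ)) (p - 1)
  rw [← iteratedDeriv_eq_iteratedFDeriv] at hfs
  have hiter := iter_formula lam x q (p - 1) 0 (by simpa using hx)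
  rw [hiter] at hfs
  have hcoeff : (cauchyPowerSeries g 0 R (p - 1) fun _ => (1 : ℂ))
      = (2 * Real.pi * Complex.I)⁻¹ *
        ∮ y in C(0, r), Complex.exp (lam * y) * y ^ (-(p : ℤ)) * (x + y) ^ (-(q : ℤ)) := by
    rw [cauchyPowerSeries_apply]
    rw [smul_eq_mul]
    congr 1
    apply circleIntegral.integral_congr hr0.le
    intro z _
    simp only [sub_zero, smul_eq_mul, one_div]
    have hz : z⁻¹ ^ (p - 1) * z⁻¹ = z ^ (-(p : ℤ)) := by
      rw [← pow_succ, Nat.sub_add_cancel hp, zpow_neg, zpow_natCast, inv_pow]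
    calc z⁻¹ ^ (p - 1) * (z⁻¹ * (Complex.exp (lam * z) * (x + z) ^ (-(q : ℤ))))
        = z⁻¹ ^ (p - 1) * z⁻¹ * (Complex.exp (lam * z) * (x + z) ^ (-(q : ℤ))) := by ring
      _ = Complex.exp (lam * z) * z ^ (-(p : ℤ)) * (x + z) ^ (-(q : ℤ)) := by rw [hz]; ring
  rw [hcoeff, nsmul_eq_mul] at hfs
  have hfac : (((p - 1).factorial : ℕ) : ℂ) ≠ 0 :=
    Nat.cast_ne_zero.mpr (Nat.factorial_ne_zero _)
  have hL : (2 * Real.pi * Complex.I)⁻¹ *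
      (∮ y in C(0, r), Complex.exp (lam * y) * y ^ (-(p : ℤ)) * (x + y) ^ (-(q : ℤ)))
      = (((p - 1).factorial : ℕ) : ℂ)⁻¹ * ∑ j ∈ Finset.range (p - 1 + 1),
          resCoeff lam q (p - 1) j * (Complex.exp (lam * 0) * (x + 0) ^ (-((q : ℤ) + j))) := by
    rw [← hfs]
    rw [← mul_assoc, inv_mul_cancel₀ hfac, one_mul]
  rw [hL]
  rw [Nat.sub_add_cancel hp, Finset.mul_sum]
  refine Finset.sum_congr rfl fun j hj => ?_
  have hj' : j ≤ p - 1 := by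
    have := Finset.mem_range.mp hj; omega
  have hchoose : ((p - 1).choose j) * (j.factorial * (p - 1 - j).factorial) = (p - 1).factorial := by
    rw [← mul_assoc]; exact Nat.choose_mul_factorial_mul_factorial hj'
  rw [resCoeff]
  simp only [mul_zero, Complex.exp_zero, add_zero, one_mul]
  have hc : (((p - 1).choose j : ℕ) : ℂ) * ((j.factorial : ℂ) * ((p - 1 - j).factorial : ℂ))
      = ((p - 1).factorial : ℂ) := by exact_mod_cast congrArg (Nat.cast (R := ℂ)) hchoose
  have hC : (((p - 1).choose j : ℕ) : ℂ) ≠ 0 := Nat.cast_ne_zero.mpr (Nat.choose_pos hj').ne'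
  have key : (((p - 1).factorial : ℕ) : ℂ)⁻¹ * (((p - 1).choose j : ℕ) : ℂ)
      = ((j.factorial : ℂ) * ((p - 1 - j).factorial : ℂ))⁻¹ := by
    rw [← hc, mul_inv_rev, mul_assoc, inv_mul_cancel₀ hC, mul_one]
  rw [div_eq_mul_inv, ← key]
  ring
end

section
/- Let λ ∈ ℂ, let x ∈ ℂ with x ≠ 0, let p ≥ 0 and q ≥ 1 be natural numbers, and let 0 < r < |x|. Then (2πi)⁻¹ · ∮_{|y+x|=r} e^(λy) · y^(-p) · (x+y)^(-q) dy = e^(-λx) · Σ_{j=0}^{q-1} (-1)^(p+j) · (-p)^{\underline{j}} · λ^(q-1-j) / (j! · (q-1-j)!) · x^(-(p+j)). -/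
open Complex Finset

lemma aux_iter_deriv (lam : ℂ) (p : ℕ) : ∀ (n : ℕ) (z : ℂ), z ≠ 0 →
    iteratedDeriv n (fun w => Complex.exp (lam * w) * w ^ (-(p : ℤ))) z =
      ∑ j ∈ Finset.range (n + 1), (n.choose j : ℂ) * lam ^ (n - j) *
        (descPochhammer ℂ j).eval (-(p : ℂ)) *
        (Complex.exp (lam * z) * z ^ (-(p : ℤ) - j)) := by
  intro n
  induction n with
  | zero => intro z hz; simp [iteratedDeriv_zero]
  | succ n ih =>
    intro z hz
    rw [iteratedDeriv_succ]
    have hev : (iteratedDeriv n (fun w => Complex.exp (lam * w) * w ^ (-(p : ℤ))))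
        =ᶠ[nhds z] (fun w => ∑ j ∈ Finset.range (n + 1), (n.choose j : ℂ) * lam ^ (n - j) *
          (descPochhammer ℂ j).eval (-(p : ℂ)) *
          (Complex.exp (lam * w) * w ^ (-(p : ℤ) - j))) := by
      filter_upwards [isOpen_compl_singleton.mem_nhds hz] with w hw
      exact ih w hw
    rw [hev.deriv_eq]
    have hder : HasDerivAt (fun w => ∑ j ∈ Finset.range (n + 1), (n.choose j : ℂ) * lam ^ (n - j) *
          (descPochhammer ℂ j).eval (-(p : ℂ)) *
          (Complex.exp (lam * w) * w ^ (-(p : ℤ) - j)))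
        (∑ j ∈ Finset.range (n + 1), (n.choose j : ℂ) * lam ^ (n - j) *
          (descPochhammer ℂ j).eval (-(p : ℂ)) *
          ((Complex.exp (lam * z) * lam) * z ^ (-(p : ℤ) - j) +
            Complex.exp (lam * z) * (((-(p : ℤ) - j : ℤ) : ℂ) * z ^ (-(p : ℤ) - j - 1)))) z := by
      apply HasDerivAt.fun_sum
      intro j _
      have h1 : HasDerivAt (fun w => Complex.exp (lam * w)) (Complex.exp (lam * z) * lam) z := by
        simpa using ((hasDerivAt_id z).const_mul lam).cexp
      have h2 : HasDerivAt (fun w : ℂ => w ^ (-(p : ℤ) - j))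
          (((-(p : ℤ) - j : ℤ) : ℂ) * z ^ (-(p : ℤ) - j - 1)) z :=
        hasDerivAt_zpow _ _ (Or.inl hz)
      simpa [mul_add, mul_comm, mul_assoc, mul_left_comm] using ((h1.mul h2).const_mul
        ((n.choose j : ℂ) * lam ^ (n - j) * (descPochhammer ℂ j).eval (-(p : ℂ))))
    rw [hder.deriv]
    -- now the combinatorial identity
    have step1 : ∀ j ∈ Finset.range (n + 1),
        (n.choose j : ℂ) * lam ^ (n - j) * (descPochhammer ℂ j).eval (-(p : ℂ)) *
          ((Complex.exp (lam * z) * lam) * z ^ (-(p : ℤ) - j) +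
            Complex.exp (lam * z) * (((-(p : ℤ) - j : ℤ) : ℂ) * z ^ (-(p : ℤ) - j - 1)))
        = (n.choose j : ℂ) * lam ^ (n + 1 - j) * (descPochhammer ℂ j).eval (-(p : ℂ)) *
            (Complex.exp (lam * z) * z ^ (-(p : ℤ) - j)) +
          (n.choose j : ℂ) * lam ^ (n - j) * (descPochhammer ℂ (j + 1)).eval (-(p : ℂ)) *
            (Complex.exp (lam * z) * z ^ (-(p : ℤ) - (j + 1 : ℕ))) := by
      intro j hj
      have hjn : j ≤ n := Nat.lt_succ_iff.mp (Finset.mem_range.mp hj)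
      have hlam : lam ^ (n + 1 - j) = lam ^ (n - j) * lam := by
        rw [← pow_succ, Nat.succ_sub hjn]
      have hd : (descPochhammer ℂ (j + 1)).eval (-(p : ℂ))
          = (descPochhammer ℂ j).eval (-(p : ℂ)) * ((-(p : ℤ) - j : ℤ) : ℂ) := by
        rw [descPochhammer_succ_eval]; push_cast; ring
      have hz2 : z ^ (-(p : ℤ) - (j + 1 : ℕ)) = z ^ (-(p : ℤ) - j - 1) := by
        congr 1; push_cast; ring
      rw [hlam, hd, hz2]; ring
    rw [Finset.sum_congr rfl step1, Finset.sum_add_distrib]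
    have ext : ∑ j ∈ Finset.range (n + 1),
        (n.choose j : ℂ) * lam ^ (n + 1 - j) * (descPochhammer ℂ j).eval (-(p : ℂ)) *
          (Complex.exp (lam * z) * z ^ (-(p : ℤ) - j))
        = ∑ j ∈ Finset.range (n + 2),
        (n.choose j : ℂ) * lam ^ (n + 1 - j) * (descPochhammer ℂ j).eval (-(p : ℂ)) *
          (Complex.exp (lam * z) * z ^ (-(p : ℤ) - j)) := by
      conv_rhs => rw [show n + 2 = (n + 1) + 1 from rfl, Finset.sum_range_succ]
      rw [Nat.choose_succ_self]
      simp
    rw [ext, Finset.sum_range_succ' (n := n + 1), Finset.sum_range_succ' (n := n + 1)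
      (f := fun j => ((n+1).choose j : ℂ) * lam ^ (n + 1 - j) *
        (descPochhammer ℂ j).eval (-(p : ℂ)) * (Complex.exp (lam * z) * z ^ (-(p : ℤ) - j)))]
    rw [add_right_comm, ← Finset.sum_add_distrib]
    congr 1
    · apply Finset.sum_congr rfl
      intro j hj
      have hch : ((n + 1).choose (j + 1) : ℂ) = (n.choose (j + 1) : ℂ) + (n.choose j : ℂ) := by
        rw [Nat.choose_succ_succ]; push_cast; ring
      have he1 : n + 1 - (j + 1) = n - j := by omega
      have he2 : ((j : ℕ) + 1 : ℕ) = (j + 1 : ℕ) := rfl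
      rw [hch, he1]
      push_cast
      ring
    · simp

/-- The residue at `y = -x` of `e^(λy) / (y^p (x+y)^q)`. -/
theorem stmt_7 (lam x : ℂ) (hx : x ≠ 0) (p q : ℕ) (hq : 1 ≤ q)
    (r : ℝ) (hr0 : 0 < r) (hrx : r < ‖x‖) :
    (2 * Real.pi * Complex.I)⁻¹ *
        (∮ y in C(-x, r), Complex.exp (lam * y) * y ^ (-(p : ℤ)) * (x + y) ^ (-(q : ℤ)))
      = Complex.exp (-(lam * x)) * ∑ j ∈ Finset.range q,
          (-1 : ℂ) ^ (p + j) * (descPochhammer ℂ j).eval (-(p : ℂ)) * lam ^ (q - 1 - j)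
            / ((j.factorial : ℂ) * ((q - 1 - j).factorial : ℂ))
            * x ^ (-((p : ℤ) + (j : ℤ))) := by
  obtain ⟨n, rfl⟩ : ∃ n, q = n + 1 := ⟨q - 1, (Nat.succ_pred_eq_of_pos hq).symm⟩
  set g : ℂ → ℂ := fun w => Complex.exp (lam * w) * w ^ (-(p : ℤ)) with hg
  set R : NNReal := ⟨r, hr0.le⟩ with hR
  have hzero : ∀ z ∈ Metric.closedBall (-x) (R : ℝ), z ≠ 0 := by
    intro z hz hz0
    rw [Metric.mem_closedBall, hz0, dist_comm, dist_eq, sub_zero, norm_neg] at hz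
    exact absurd (lt_of_lt_of_le hrx hz) (lt_irrefl _)
  have hd : DifferentiableOn ℂ g (Metric.closedBall (-x) (R : ℝ)) := by
    intro z hz
    exact (((differentiableAt_id.const_mul lam).cexp.mul
      ((differentiableAt_zpow).mpr (Or.inl (hzero z hz))))).differentiableWithinAt
  have hps := hd.hasFPowerSeriesOnBall (show 0 < R from hr0)
  have hcoef := hps.factorial_smul (y := (1 : ℂ)) n
  rw [← iteratedDeriv_eq_iteratedFDeriv] at hcoef
  have hint : (∮ y in C(-x, r), Complex.exp (lam * y) * y ^ (-(p : ℤ)) *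
        (x + y) ^ (-((n + 1 : ℕ) : ℤ)))
      = ∮ z in C(-x, (R : ℝ)), (z - -x)⁻¹ ^ n • (z - -x)⁻¹ • g z := by
    congr 1
    funext z
    rw [smul_eq_mul, smul_eq_mul, sub_neg_eq_add, hg]
    have : (x + z) ^ (-((n + 1 : ℕ) : ℤ)) = ((x + z)⁻¹) ^ (n + 1) := by
      rw [zpow_neg, zpow_natCast, inv_pow]
    rw [this, pow_succ, show z + x = x + z from add_comm z x]
    ring
  have hcps : (cauchyPowerSeries g (-x) (R : ℝ) n) (fun _ => (1 : ℂ))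
      = (2 * Real.pi * Complex.I)⁻¹ *
          ∮ z in C(-x, (R : ℝ)), (z - -x)⁻¹ ^ n • (z - -x)⁻¹ • g z := by
    simp [cauchyPowerSeries, ContinuousMultilinearMap.mkPiRing_apply, smul_eq_mul]
  have hfac : ((n.factorial : ℂ)) ≠ 0 := Nat.cast_ne_zero.mpr n.factorial_ne_zero
  have h2 : (2 * Real.pi * Complex.I)⁻¹ *
        (∮ y in C(-x, r), Complex.exp (lam * y) * y ^ (-(p : ℤ)) *
          (x + y) ^ (-((n + 1 : ℕ) : ℤ)))
      = (n.factorial : ℂ)⁻¹ * iteratedDeriv n g (-x) := by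
    rw [hint, ← hcoef, nsmul_eq_mul, hcps]
    field_simp
  rw [h2, aux_iter_deriv lam p n (-x) (neg_ne_zero.mpr hx)]
  simp only [Nat.add_sub_cancel]
  rw [Finset.mul_sum, Finset.mul_sum]
  apply Finset.sum_congr rfl
  intro j hj
  have hjn : j ≤ n := Nat.lt_succ_iff.mp (Finset.mem_range.mp hj)
  have hnx : (-x : ℂ) ^ (-(p : ℤ) - (j : ℤ)) = (-1 : ℂ) ^ (p + j) * x ^ (-((p : ℤ) + (j : ℤ))) := by
    rw [show (-x : ℂ) = (-1 : ℂ) * x from (neg_one_mul x).symm, mul_zpow,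
      show -(p : ℤ) - (j : ℤ) = -(((p + j : ℕ) : ℤ)) by push_cast; ring]
    rw [show ((-1 : ℂ)) ^ (-(((p + j : ℕ)) : ℤ)) = (-1 : ℂ) ^ (p + j) by
      rw [zpow_neg, zpow_natCast, ← inv_pow, inv_neg_one]]
    norm_cast
  have hcf : (n.choose j : ℂ) * (j.factorial : ℂ) * ((n - j).factorial : ℂ)
      = (n.factorial : ℂ) := by
    exact_mod_cast congrArg (Nat.cast : ℕ → ℂ) (Nat.choose_mul_factorial_mul_factorial hjn)
  have hjf : ((j.factorial : ℂ)) ≠ 0 := Nat.cast_ne_zero.mpr j.factorial_ne_zero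
  have hnjf : (((n - j).factorial : ℂ)) ≠ 0 := Nat.cast_ne_zero.mpr (n - j).factorial_ne_zero
  rw [hnx, show Complex.exp (lam * -x) = Complex.exp (-(lam * x)) by rw [mul_neg]]
  field_simp
  linear_combination (lam ^ (n - j) * (descPochhammer ℂ j).eval (-(p : ℂ))) * hcf
end

section
/- Let λ ∈ ℂ, let x ∈ ℂ with x ≠ 0, let p ≥ 1 and q ≥ 1 be natural numbers, and let r > |x|. Then (2πi)⁻¹ · ∮_{|y|=r} e^(λy) · y^(-p) · (x+y)^(-q) dy = Σ_{j=0}^{p-1} (-q)^{\underline{j}} · λ^(p-1-j) / (j! · (p-1-j)!) · x^(-(q+j)) + e^(-λx) · Σ_{j=0}^{q-1} (-1)^(p+j) · (-p)^{\underline{j}} · λ^(q-1-j) / (j! · (q-1-j)!) · x^(-(p+j)). -/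
open Complex Finset
open Metric

lemma circInt (lam c : ℂ) (r : ℝ) (hr : 0 < r) (hc : ‖c‖ < r) (m : ℤ) :
    CircleIntegrable (fun z => Complex.exp (lam * z) * (z - c) ^ m) 0 r := by
  apply ContinuousOn.circleIntegrable hr.le
  intro z hz
  have hzc : z - c ≠ 0 := by
    rw [sub_ne_zero]
    rintro rfl
    rw [mem_sphere_iff_norm, sub_zero] at hz
    exact (ne_of_lt hc) hz
  exact ((Complex.continuous_exp.comp (continuous_const.mul continuous_id)).continuousWithinAt).mul
    (((continuousAt_id.sub continuousAt_const).zpow₀ m (Or.inl hzc)).continuousWithinAt)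

lemma circleIntegrable_const_mul {a : ℂ} {f : ℂ → ℂ} {c : ℂ} {R : ℝ}
    (hf : CircleIntegrable f c R) : CircleIntegrable (fun z => a * f z) c R := by
  unfold CircleIntegrable at *
  simpa using hf.const_mul a

lemma cauchy_exp_pow (lam c : ℂ) (r : ℝ) (hc : ‖c‖ < r) (k : ℕ) :
    (∮ z in C(0, r), Complex.exp (lam * z) * (z - c) ^ (-(k : ℤ) - 1)) =
      2 * Real.pi * Complex.I * (lam ^ k * Complex.exp (lam * c) / k.factorial) := by
  have hr : 0 < r := lt_of_le_of_lt (norm_nonneg c) hc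
  induction k with
  | zero =>
    have := Complex.circleIntegral_sub_inv_smul_of_differentiable_on_off_countable
      (f := fun z => Complex.exp (lam * z)) (s := (∅ : Set ℂ)) (c := 0) (w := c) (R := r)
      Set.countable_empty (by simpa [mem_ball_zero_iff] using hc)
      (Complex.continuous_exp.comp (continuous_const.mul continuous_id)).continuousOn
      (fun x _ => (Complex.differentiable_exp.comp ((differentiable_const lam).mul
        differentiable_id)).differentiableAt)
    rw [circleIntegral.integral_congr hr.le (g := fun z => (z - c)⁻¹ • Complex.exp (lam * z))
      (fun z _ => by simp [smul_eq_mul, mul_comm, zpow_neg]), this]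
    simp [smul_eq_mul]
  | succ k ih =>
    have hD : ∀ z ∈ sphere (0 : ℂ) r, HasDerivWithinAt
        (fun z => Complex.exp (lam * z) * (z - c) ^ (-(k : ℤ) - 1))
        (lam * (Complex.exp (lam * z) * (z - c) ^ (-(k : ℤ) - 1))
          - ((k : ℂ) + 1) * (Complex.exp (lam * z) * (z - c) ^ (-((k:ℕ)+1 : ℤ) - 1))) (sphere 0 r) z := by
      intro z hz
      have hzc : z - c ≠ 0 := by
        rw [sub_ne_zero]
        rintro rfl
        rw [mem_sphere_iff_norm, sub_zero] at hz
        exact (ne_of_lt hc) hz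
      have h1 : HasDerivAt (fun z => Complex.exp (lam * z)) (Complex.exp (lam * z) * lam) z := by
        have := (Complex.hasDerivAt_exp (lam * z)).comp z ((hasDerivAt_id z).const_mul lam)
        simp only [Function.comp_def, mul_one] at this
        exact this
      have h2 : HasDerivAt (fun z => (z - c) ^ (-(k : ℤ) - 1))
          ((-(k : ℤ) - 1) * (z - c) ^ (-(k : ℤ) - 2)) z := by
        have := (hasDerivAt_zpow (-(k : ℤ) - 1) (z - c) (Or.inl hzc)).comp z
          ((hasDerivAt_id z).sub_const c)
        simp only [Function.comp_def, id, sub_sub, mul_one, Int.cast_sub, Int.cast_neg,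
          Int.cast_natCast, Int.cast_one] at this
        rw [show (-(k:ℤ) - 2) = -(k:ℤ) - (1 + 1) by ring]
        exact this
      apply HasDerivAt.hasDerivWithinAt
      rw [show (-((k:ℕ)+1 : ℤ) - 1) = -(k:ℤ) - 2 by push_cast; ring]
      have e : lam * (Complex.exp (lam * z) * (z - c) ^ (-(k : ℤ) - 1))
          - ((k : ℂ) + 1) * (Complex.exp (lam * z) * (z - c) ^ (-(k:ℤ) - 2))
          = Complex.exp (lam * z) * lam * (z - c) ^ (-(k : ℤ) - 1)
            + Complex.exp (lam * z) * ((-((k : ℤ) : ℂ) - 1) * (z - c) ^ (-(k : ℤ) - 2)) := by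
        push_cast
        ring
      rw [e]
      exact h1.mul h2
    have hzero := circleIntegral.integral_eq_zero_of_hasDerivWithinAt hr.le hD
    have hint1 := circInt lam c r hr hc (-(k : ℤ) - 1)
    have hint2 := circInt lam c r hr hc (-((k:ℕ)+1 : ℤ) - 1)
    rw [circleIntegral.integral_sub (circleIntegrable_const_mul hint1)
        (circleIntegrable_const_mul hint2),
      circleIntegral.integral_const_mul, circleIntegral.integral_const_mul, ih,
      sub_eq_zero] at hzero
    have hk1 : ((k : ℂ) + 1) ≠ 0 := Nat.cast_add_one_ne_zero k
    have hkf : (k.factorial : ℂ) ≠ 0 := Nat.cast_ne_zero.mpr k.factorial_ne_zero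
    refine mul_left_cancel₀ hk1 ?_
    push_cast [Nat.factorial_succ]
    rw [← hzero]
    field_simp
    ring


noncomputable def AA (lam x : ℂ) (p q : ℕ) : ℂ :=
  ∑ j ∈ Finset.range p,
    (descPochhammer ℂ j).eval (-(q : ℂ)) * lam ^ (p - 1 - j)
      / ((j.factorial : ℂ) * ((p - 1 - j).factorial : ℂ))
      * x ^ (-((q : ℤ) + (j : ℤ)))

noncomputable def BB (lam x : ℂ) (p q : ℕ) : ℂ :=
  ∑ j ∈ Finset.range q,
    (-1 : ℂ) ^ (p + j) * (descPochhammer ℂ j).eval (-(p : ℂ)) * lam ^ (q - 1 - j)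
      / ((j.factorial : ℂ) * ((q - 1 - j).factorial : ℂ))
      * x ^ (-((p : ℤ) + (j : ℤ)))

lemma zp (x : ℂ) (a b : ℕ) : x ^ (-((a : ℤ) + (b : ℤ))) = (x ^ (a + b))⁻¹ := by
  have h : -((a : ℤ) + (b : ℤ)) = -((a + b : ℕ) : ℤ) := by push_cast; ring
  rw [h, zpow_neg, zpow_natCast]

lemma desc_succ_left_eval (j : ℕ) (z : ℂ) :
    (descPochhammer ℂ (j + 1)).eval z = z * (descPochhammer ℂ j).eval (z - 1) := by
  rw [descPochhammer_succ_left]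
  simp [Polynomial.eval_comp]

lemma sum_shift {M : Type*} [AddCommGroup M] (p : ℕ) (F G H : ℕ → M)
    (h0 : F 0 = G 0) (hs : ∀ j, j < p → F (j + 1) = G (j + 1) - H j) :
    ∑ j ∈ Finset.range (p + 1), F j
      = ∑ j ∈ Finset.range (p + 1), G j - ∑ j ∈ Finset.range p, H j := by
  rw [Finset.sum_range_succ' F, Finset.sum_range_succ' G,
    Finset.sum_congr rfl (fun j hj => hs j (Finset.mem_range.mp hj)), Finset.sum_sub_distrib, h0]
  abel

lemma sum_shift' {M : Type*} [AddCommGroup M] (q : ℕ) (F G H : ℕ → M)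
    (h0 : F 0 = -G 0) (hs : ∀ j, j < q → F (j + 1) = H j - G (j + 1)) :
    ∑ j ∈ Finset.range (q + 1), F j
      = ∑ j ∈ Finset.range q, H j - ∑ j ∈ Finset.range (q + 1), G j := by
  rw [Finset.sum_range_succ' F, Finset.sum_range_succ' G,
    Finset.sum_congr rfl (fun j hj => hs j (Finset.mem_range.mp hj)), Finset.sum_sub_distrib, h0]
  abel

lemma sumA (lam x : ℂ) (hx : x ≠ 0) (p q : ℕ) :
    AA lam x (p + 1) (q + 1) = x⁻¹ * AA lam x (p + 1) q - x⁻¹ * AA lam x p (q + 1) := by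
  unfold AA
  simp only [zp]
  rw [Finset.mul_sum, Finset.mul_sum]
  refine sum_shift p _ _ _ ?_ ?_
  · simp only [descPochhammer_zero, Polynomial.eval_one, Nat.factorial_zero, Nat.cast_one,
      one_mul, Nat.add_zero, Nat.sub_zero, pow_succ, mul_inv, div_eq_mul_inv]
    ring
  · intro j hj
    simp only [show p + 1 - 1 - (j + 1) = p - 1 - j from by omega,
      show p + 1 - 1 = p from by omega]
    have hd1 : (descPochhammer ℂ (j + 1)).eval (-(((q + 1 : ℕ)) : ℂ))
        = (descPochhammer ℂ j).eval (-(((q + 1 : ℕ)) : ℂ)) * (-(((q + 1 : ℕ)) : ℂ) - j) :=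
      descPochhammer_succ_eval j _
    have hd2 : (descPochhammer ℂ (j + 1)).eval (-(q : ℂ))
        = (-(q : ℂ)) * (descPochhammer ℂ j).eval (-(((q + 1 : ℕ)) : ℂ)) := by
      rw [desc_succ_left_eval]
      congr 1
      push_cast
      ring
    rw [hd1, hd2]
    have hfs : (((j + 1).factorial : ℕ) : ℂ) = ((j : ℂ) + 1) * (j.factorial : ℂ) := by
      push_cast [Nat.factorial_succ]; ring
    rw [hfs, show q + 1 + (j + 1) = (q + 1 + j) + 1 from by ring,
      show q + (j + 1) = q + 1 + j from by ring, pow_succ]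
    push_cast
    simp only [Nat.sub_sub, div_eq_mul_inv, mul_inv]
    simp only [show 1 + j = j + 1 from Nat.add_comm 1 j]
    have hj1 : ((j : ℂ) + 1) ≠ 0 := Nat.cast_add_one_ne_zero j
    have key : (-((q : ℂ) + 1) - (j : ℂ)) * ((j : ℂ) + 1)⁻¹ = -(q : ℂ) * ((j : ℂ) + 1)⁻¹ - 1 := by
      field_simp
      ring
    linear_combination ((descPochhammer ℂ j).eval (-((q : ℂ) + 1)) * lam ^ (p - (j + 1)) *
      ((j.factorial : ℂ))⁻¹ * (((p - (j + 1)).factorial : ℂ))⁻¹ * ((x : ℂ) ^ (q + 1 + j))⁻¹ * x⁻¹) * key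

lemma sumB (lam x : ℂ) (hx : x ≠ 0) (p q : ℕ) :
    BB lam x (p + 1) (q + 1) = x⁻¹ * BB lam x (p + 1) q - x⁻¹ * BB lam x p (q + 1) := by
  unfold BB
  simp only [zp]
  rw [Finset.mul_sum, Finset.mul_sum]
  refine sum_shift' q _ _ _ ?_ ?_
  · simp only [descPochhammer_zero, Polynomial.eval_one, Nat.factorial_zero, Nat.cast_one,
      one_mul, Nat.add_zero, Nat.sub_zero, pow_succ, mul_inv, div_eq_mul_inv]
    ring
  · intro j hj
    simp only [show q + 1 - 1 - (j + 1) = q - 1 - j from by omega,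
      show q + 1 - 1 = q from by omega]
    have hd1 : (descPochhammer ℂ (j + 1)).eval (-(((p + 1 : ℕ)) : ℂ))
        = (descPochhammer ℂ j).eval (-(((p + 1 : ℕ)) : ℂ)) * (-(((p + 1 : ℕ)) : ℂ) - j) :=
      descPochhammer_succ_eval j _
    have hd2 : (descPochhammer ℂ (j + 1)).eval (-(p : ℂ))
        = (-(p : ℂ)) * (descPochhammer ℂ j).eval (-(((p + 1 : ℕ)) : ℂ)) := by
      rw [desc_succ_left_eval]
      congr 1
      push_cast
      ring
    rw [hd1, hd2]
    have hfs : (((j + 1).factorial : ℕ) : ℂ) = ((j : ℂ) + 1) * (j.factorial : ℂ) := by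
      push_cast [Nat.factorial_succ]; ring
    rw [hfs, show p + 1 + (j + 1) = (p + 1 + j) + 1 from by ring,
      show p + (j + 1) = p + 1 + j from by ring, pow_succ]
    push_cast
    simp only [Nat.sub_sub, div_eq_mul_inv, mul_inv]
    simp only [show 1 + j = j + 1 from Nat.add_comm 1 j]
    have hj1 : ((j : ℂ) + 1) ≠ 0 := Nat.cast_add_one_ne_zero j
    have key : (-((p : ℂ) + 1) - (j : ℂ)) * ((j : ℂ) + 1)⁻¹ = -(p : ℂ) * ((j : ℂ) + 1)⁻¹ - 1 := by
      field_simp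
      ring
    linear_combination ((-1 : ℂ) ^ (p + j) * (descPochhammer ℂ j).eval (-((p : ℂ) + 1)) *
      lam ^ (q - (j + 1)) * ((j.factorial : ℂ))⁻¹ * (((q - (j + 1)).factorial : ℂ))⁻¹ *
      ((x : ℂ) ^ (p + 1 + j))⁻¹ * x⁻¹) * key

lemma AA_zero (lam x : ℂ) (q : ℕ) : AA lam x 0 q = 0 := by simp [AA]

lemma BB_zero (lam x : ℂ) (p : ℕ) : BB lam x p 0 = 0 := by simp [BB]

lemma AA_q0 (lam x : ℂ) (p : ℕ) : AA lam x (p + 1) 0 = lam ^ p / p.factorial := by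
  unfold AA
  rw [Finset.sum_eq_single 0]
  · simp
  · intro j _ hj
    simp [descPochhammer_eval_zero, hj]
  · simp

lemma BB_p0 (lam x : ℂ) (q : ℕ) : BB lam x 0 (q + 1) = lam ^ q / q.factorial := by
  unfold BB
  rw [Finset.sum_eq_single 0]
  · simp
  · intro j _ hj
    simp [descPochhammer_eval_zero, hj]
  · simp

lemma circInt2 (lam x : ℂ) (r : ℝ) (hr : 0 < r) (hrx : ‖x‖ < r) (m n : ℤ) :
    CircleIntegrable (fun y => Complex.exp (lam * y) * y ^ m * (x + y) ^ n) 0 r := by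
  apply ContinuousOn.circleIntegrable hr.le
  intro y hy
  rw [mem_sphere_iff_norm, sub_zero] at hy
  have hy0 : y ≠ 0 := by
    rintro rfl
    simp at hy
    exact hr.ne hy
  have hxy : x + y ≠ 0 := by
    intro h
    have : y = -x := by linear_combination h - x - y + (x + y)
    rw [this] at hy
    simp at hy
    exact (ne_of_lt hrx) hy
  exact (((Complex.continuous_exp.comp (continuous_const.mul continuous_id)).continuousWithinAt).mul
    ((continuousAt_id.zpow₀ m (Or.inl hy0)).continuousWithinAt)).mul
    (((continuousAt_const.add continuousAt_id).zpow₀ n (Or.inl hxy)).continuousWithinAt)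

lemma aux (lam x : ℂ) (hx : x ≠ 0) (r : ℝ) (hrx : ‖x‖ < r) :
    ∀ p q : ℕ, (∮ y in C(0, r), Complex.exp (lam * y) * y ^ (-(p : ℤ)) * (x + y) ^ (-(q : ℤ)))
      = 2 * Real.pi * Complex.I
          * (AA lam x p q + Complex.exp (-(lam * x)) * BB lam x p q) := by
  have hr : 0 < r := (norm_nonneg x).trans_lt hrx
  have hax : ‖-x‖ < r := by rwa [norm_neg]
  have hax0 : ‖(0 : ℂ)‖ < r := by simpa using hr
  intro p
  induction p with
  | zero =>
    intro q
    cases q with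
    | zero =>
      rw [AA_zero, BB_zero]
      have h0 : (∮ y in C(0, r), Complex.exp (lam * y) * y ^ (-((0:ℕ) : ℤ)) * (x + y) ^ (-((0:ℕ) : ℤ)))
          = ∮ y in C(0, r), Complex.exp (lam * y) :=
        circleIntegral.integral_congr hr.le (fun y _ => by simp)
      have h1 : (∮ y in C(0, r), Complex.exp (lam * y)) = 0 :=
        Complex.circleIntegral_eq_zero_of_differentiable_on_off_countable hr.le
          Set.countable_empty ((continuous_const.mul continuous_id').cexp).continuousOn
          (fun z _ => (((differentiable_const lam).mul differentiable_id).cexp).differentiableAt)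
      rw [h0, h1]
      ring
    | succ q =>
      rw [AA_zero, BB_p0]
      have h0 : (∮ y in C(0, r), Complex.exp (lam * y) * y ^ (-((0:ℕ) : ℤ)) * (x + y) ^ (-(((q+1):ℕ) : ℤ)))
          = ∮ y in C(0, r), Complex.exp (lam * y) * (y - (-x)) ^ (-(q : ℤ) - 1) :=
        circleIntegral.integral_congr hr.le (fun y _ => by
          rw [show ((-((0:ℕ):ℤ)) : ℤ) = 0 from by simp, zpow_zero, mul_one, sub_neg_eq_add,
            add_comm y x, show (-(((q+1):ℕ) : ℤ)) = -(q : ℤ) - 1 from by push_cast; ring])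
      rw [h0, cauchy_exp_pow lam (-x) r hax q, mul_neg lam x]
      ring
  | succ p ihp =>
    intro q
    induction q with
    | zero =>
      have h0 : (∮ y in C(0, r), Complex.exp (lam * y) * y ^ (-(((p+1):ℕ) : ℤ)) * (x + y) ^ (-((0:ℕ) : ℤ)))
          = ∮ y in C(0, r), Complex.exp (lam * y) * (y - 0) ^ (-(p : ℤ) - 1) :=
        circleIntegral.integral_congr hr.le (fun y _ => by
          rw [sub_zero, show ((-((0:ℕ):ℤ)) : ℤ) = 0 from by simp, zpow_zero, mul_one,
            show (-(((p+1):ℕ) : ℤ)) = -(p : ℤ) - 1 from by push_cast; ring])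
      rw [h0, cauchy_exp_pow lam 0 r hax0 p, AA_q0, BB_zero, mul_zero, Complex.exp_zero]
      ring
    | succ q ihq =>
      have hsplit : ∀ y ∈ sphere (0:ℂ) r,
          Complex.exp (lam * y) * y ^ (-(((p+1):ℕ) : ℤ)) * (x + y) ^ (-(((q+1):ℕ) : ℤ))
            = x⁻¹ * (Complex.exp (lam * y) * y ^ (-(((p+1):ℕ) : ℤ)) * (x + y) ^ (-(q : ℤ)))
              - x⁻¹ * (Complex.exp (lam * y) * y ^ (-(p : ℤ)) * (x + y) ^ (-(((q+1):ℕ) : ℤ))) := by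
        intro y hy
        rw [mem_sphere_iff_norm, sub_zero] at hy
        have hy0 : y ≠ 0 := by
          rintro rfl
          simp at hy
          exact hr.ne hy
        have hxy : x + y ≠ 0 := by
          intro h
          have : y = -x := by linear_combination h - x - y + (x + y)
          rw [this] at hy
          simp at hy
          exact (ne_of_lt hrx) hy
        have hyp : (y : ℂ) ^ (p+1) ≠ 0 := pow_ne_zero _ hy0
        have hxyq : (x + y) ^ (q+1) ≠ 0 := pow_ne_zero _ hxy
        simp only [zpow_neg, zpow_natCast, pow_succ, mul_inv]
        have key : y⁻¹ * (x + y)⁻¹ = x⁻¹ * y⁻¹ - x⁻¹ * (x + y)⁻¹ := by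
          field_simp
          ring
        linear_combination (Complex.exp (lam * y) * ((y ^ p)⁻¹) * (((x + y) ^ q)⁻¹)) * key
      rw [circleIntegral.integral_congr hr.le hsplit,
        circleIntegral.integral_sub
          (circleIntegrable_const_mul (circInt2 lam x r hr hrx (-(((p+1):ℕ) : ℤ)) (-(q : ℤ))))
          (circleIntegrable_const_mul (circInt2 lam x r hr hrx (-(p : ℤ)) (-(((q+1):ℕ) : ℤ)))),
        circleIntegral.integral_const_mul, circleIntegral.integral_const_mul,
        ihq, ihp (q + 1), sumA lam x hx p q, sumB lam x hx p q]
      ring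

/-- The total residue of `e^(λy) / (y^p (x+y)^q)`: a circle of radius `r > |x|`
centered at `0` encloses both poles `y = 0` and `y = -x`. -/
theorem stmt_8 (lam x : ℂ) (hx : x ≠ 0) (p q : ℕ) (hp : 1 ≤ p) (hq : 1 ≤ q)
    (r : ℝ) (hrx : ‖x‖ < r) :
    (2 * Real.pi * Complex.I)⁻¹ *
        (∮ y in C(0, r), Complex.exp (lam * y) * y ^ (-(p : ℤ)) * (x + y) ^ (-(q : ℤ)))
      = (∑ j ∈ Finset.range p,
          (descPochhammer ℂ j).eval (-(q : ℂ)) * lam ^ (p - 1 - j)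
            / ((j.factorial : ℂ) * ((p - 1 - j).factorial : ℂ))
            * x ^ (-((q : ℤ) + (j : ℤ))))
        + Complex.exp (-(lam * x)) * ∑ j ∈ Finset.range q,
            (-1 : ℂ) ^ (p + j) * (descPochhammer ℂ j).eval (-(p : ℂ)) * lam ^ (q - 1 - j)
              / ((j.factorial : ℂ) * ((q - 1 - j).factorial : ℂ))
              * x ^ (-((p : ℤ) + (j : ℤ))) := by
  rw [aux lam x hx r hrx p q, inv_mul_cancel_left₀ Complex.two_pi_I_ne_zero]
  rfl
end

section
/- Let b ≥ 1, c ≥ 0 and δ ≥ 0 be natural numbers and let u, v be real numbers. Then Σ_{j=0}^{b-1} [ (-c)^{\underline{j}} / (j! · (b-1-j)! · (δ+j)!) ] · (u+v)^(δ+j) · v^(b-1-j) = (1/(δ+b-1)!) · Σ_{i=0}^{δ+b-1} C(δ+b-1, i) · binom(δ+b-1-c-i, b-1) · u^i · v^(δ+b-1-i). -/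
open Finset

/-- The generalized binomial coefficient `binom(z, j) = z^{\underline{j}} / j!`
with real (possibly negative integer) upper index. -/
noncomputable def genBinom (z : ℝ) (j : ℕ) : ℝ :=
  (descPochhammer ℝ j).eval z / (j.factorial : ℝ)

open Polynomial

private lemma genBinom_natCast (n j : ℕ) : genBinom (n : ℝ) j = (n.choose j : ℝ) := by
  rw [genBinom, descPochhammer_eval_eq_descFactorial,
    Nat.descFactorial_eq_factorial_mul_choose]
  push_cast
  rw [mul_comm, mul_div_assoc, div_self (by positivity), mul_one]

lemma genBinom_vandermonde (x : ℝ) (n k : ℕ) :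
    genBinom (x + (n : ℝ)) k
      = ∑ j ∈ range (k + 1), genBinom x j * (n.choose (k - j) : ℝ) := by
  have hk : ((k.factorial : ℝ)) ≠ 0 := by positivity
  set p : ℝ[X] := (descPochhammer ℝ k).comp (X + C (n : ℝ)) with hp
  set q : ℝ[X] := ∑ j ∈ range (k + 1),
      C ((k.factorial : ℝ) / (j.factorial : ℝ) * (n.choose (k - j) : ℝ)) *
        descPochhammer ℝ j with hq
  have hpq : p = q := by
    apply Polynomial.eq_of_infinite_eval_eq
    have hinf : (Set.range (Nat.cast : ℕ → ℝ)).Infinite :=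
      Set.infinite_range_of_injective Nat.cast_injective
    refine hinf.mono ?_
    rintro _ ⟨m, rfl⟩
    simp only [Set.mem_setOf_eq, hp, hq, eval_comp, eval_add, eval_X, eval_C,
      eval_finset_sum, eval_mul]
    rw [← Nat.cast_add, descPochhammer_eval_eq_descFactorial,
      Nat.descFactorial_eq_factorial_mul_choose]
    have hv := Nat.add_choose_eq m n k
    rw [Finset.Nat.sum_antidiagonal_eq_sum_range_succ_mk] at hv
    rw [hv]
    push_cast
    rw [Finset.mul_sum]
    apply Finset.sum_congr rfl
    intro j hj
    rw [descPochhammer_eval_eq_descFactorial,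
      Nat.descFactorial_eq_factorial_mul_choose]
    push_cast
    field_simp
  have h1 : genBinom (x + (n : ℝ)) k = (p.eval x) / (k.factorial : ℝ) := by
    rw [genBinom, hp, eval_comp, eval_add, eval_X, eval_C]
  rw [h1, hpq, hq, eval_finset_sum, Finset.sum_div]
  apply Finset.sum_congr rfl
  intro j hj
  rw [eval_mul, eval_C, genBinom]
  field_simp

lemma key_scalar (δ b' c i : ℕ) (hi : i ≤ δ + b') :
    ∑ j ∈ range (b' + 1),
        (descPochhammer ℝ j).eval (-(c : ℝ))
          / ((j.factorial : ℝ) * ((b' - j).factorial : ℝ) * ((δ + j).factorial : ℝ))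
          * ((δ + j).choose i : ℝ)
      = 1 / ((δ + b').factorial : ℝ) * ((δ + b').choose i : ℝ) *
          genBinom (-(c : ℝ) + ((δ + b' - i : ℕ) : ℝ)) b' := by
  rw [genBinom_vandermonde, Finset.mul_sum]
  apply Finset.sum_congr rfl
  intro j hj
  have hjb : j ≤ b' := by simpa [Nat.lt_succ_iff] using hj
  by_cases hij : i ≤ δ + j
  · have h1 : ((δ + j).choose i : ℝ)
        = ((δ + j).factorial : ℝ) / ((i.factorial : ℝ) * ((δ + j - i).factorial : ℝ)) :=
      Nat.cast_choose ℝ hij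
    have h2 : ((δ + b').choose i : ℝ)
        = ((δ + b').factorial : ℝ) / ((i.factorial : ℝ) * ((δ + b' - i).factorial : ℝ)) :=
      Nat.cast_choose ℝ hi
    have h3 : ((δ + b' - i).choose (b' - j) : ℝ)
        = ((δ + b' - i).factorial : ℝ)
          / (((b' - j).factorial : ℝ) * ((δ + b' - i - (b' - j)).factorial : ℝ)) :=
      Nat.cast_choose ℝ (by omega)
    have h4 : δ + b' - i - (b' - j) = δ + j - i := by omega
    rw [h1, h2, h3, h4, genBinom]
    have f0 : ∀ m : ℕ, ((m.factorial : ℝ)) ≠ 0 := fun m => by positivity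
    field_simp
  · have h1 : (δ + j).choose i = 0 := Nat.choose_eq_zero_of_lt (by omega)
    have h2 : (δ + b' - i).choose (b' - j) = 0 := Nat.choose_eq_zero_of_lt (by omega)
    rw [h1, h2]
    simp

/-- Closed form of the term `R₁₁` in the volume formula for line arrangements. -/
theorem stmt_9 (b c δ : ℕ) (hb : 1 ≤ b) (u v : ℝ) :
    ∑ j ∈ Finset.range b,
        (descPochhammer ℝ j).eval (-(c : ℝ))
          / ((j.factorial : ℝ) * ((b - 1 - j).factorial : ℝ) * ((δ + j).factorial : ℝ))
          * (u + v) ^ (δ + j) * v ^ (b - 1 - j)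
      = (1 / ((δ + b - 1).factorial : ℝ)) *
          ∑ i ∈ Finset.range (δ + b),
            ((δ + b - 1).choose i : ℝ)
              * genBinom ((δ : ℝ) + (b : ℝ) - 1 - (c : ℝ) - (i : ℝ)) (b - 1)
              * u ^ i * v ^ (δ + b - 1 - i) := by
  obtain ⟨b', rfl⟩ : ∃ b', b = b' + 1 := ⟨b - 1, by omega⟩
  have e1 : b' + 1 - 1 = b' := rfl
  have e2 : δ + (b' + 1) - 1 = δ + b' := by omega
  have e3 : δ + (b' + 1) = δ + b' + 1 := by omega
  simp only [e1, e2, e3, Nat.add_sub_cancel, Nat.cast_add, Nat.cast_one]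
  -- expand the power
  have hpow : ∀ j, j ≤ b' → (u + v) ^ (δ + j) * v ^ (b' - j)
      = ∑ i ∈ range (δ + b' + 1), ((δ + j).choose i : ℝ) * (u ^ i * v ^ (δ + b' - i)) := by
    intro j hj
    rw [add_pow, Finset.sum_mul]
    rw [Finset.sum_subset (Finset.range_subset_range.2 (by omega : δ + j + 1 ≤ δ + b' + 1))]
    · apply Finset.sum_congr rfl
      intro i hi
      by_cases hij : i ≤ δ + j
      · have hvv : δ + j - i + (b' - j) = δ + b' - i := by omega
        calc u ^ i * v ^ (δ + j - i) * ((δ + j).choose i : ℝ) * v ^ (b' - j)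
            = ((δ + j).choose i : ℝ) * (u ^ i * (v ^ (δ + j - i) * v ^ (b' - j))) := by ring
          _ = ((δ + j).choose i : ℝ) * (u ^ i * v ^ (δ + b' - i)) := by
              rw [← pow_add, hvv]
      · rw [Nat.choose_eq_zero_of_lt (by omega)]
        simp
    · intro i hi hni
      have : δ + j < i := by
        simp only [mem_range] at hi hni
        omega
      rw [Nat.choose_eq_zero_of_lt this]
      simp
  calc ∑ j ∈ range (b' + 1),
        (descPochhammer ℝ j).eval (-(c : ℝ))
          / ((j.factorial : ℝ) * ((b' - j).factorial : ℝ) * ((δ + j).factorial : ℝ))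
          * (u + v) ^ (δ + j) * v ^ (b' - j)
      = ∑ j ∈ range (b' + 1), ∑ i ∈ range (δ + b' + 1),
          (descPochhammer ℝ j).eval (-(c : ℝ))
            / ((j.factorial : ℝ) * ((b' - j).factorial : ℝ) * ((δ + j).factorial : ℝ))
            * ((δ + j).choose i : ℝ) * (u ^ i * v ^ (δ + b' - i)) := by
        apply Finset.sum_congr rfl
        intro j hj
        rw [mul_assoc, hpow j (by simpa [Nat.lt_succ_iff] using hj), Finset.mul_sum]
        simp only [mul_assoc]
    _ = ∑ i ∈ range (δ + b' + 1), (∑ j ∈ range (b' + 1),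
          (descPochhammer ℝ j).eval (-(c : ℝ))
            / ((j.factorial : ℝ) * ((b' - j).factorial : ℝ) * ((δ + j).factorial : ℝ))
            * ((δ + j).choose i : ℝ)) * (u ^ i * v ^ (δ + b' - i)) := by
        rw [Finset.sum_comm]
        apply Finset.sum_congr rfl
        intro i _
        rw [Finset.sum_mul]
    _ = 1 / ((δ + b').factorial : ℝ) *
          ∑ i ∈ range (δ + b' + 1),
            ((δ + b').choose i : ℝ)
              * genBinom ((δ : ℝ) + ((b' : ℝ) + 1) - 1 - (c : ℝ) - (i : ℝ)) b'
              * u ^ i * v ^ (δ + b' - i) := by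
        rw [Finset.mul_sum]
        apply Finset.sum_congr rfl
        intro i hi
        have hi' : i ≤ δ + b' := by simpa [Nat.lt_succ_iff] using hi
        have harg : (δ : ℝ) + ((b' : ℝ) + 1) - 1 - (c : ℝ) - (i : ℝ)
            = -(c : ℝ) + ((δ + b' - i : ℕ) : ℝ) := by
          rw [Nat.cast_sub hi']
          push_cast
          ring
        rw [harg, key_scalar δ b' c i hi']
        ring
end

section
/- Let a, b, c be natural numbers with b ≥ 1, a+b ≥ 1 and a+c ≥ 1, and let u, v be real numbers. Then Σ_{j=0}^{b-1} (-c)^{\underline{j}} · (u+v)^(a+c-1+j) · v^(b-1-j) / (j! · (b-1-j)! · (a+c-1+j)!) + Σ_{j=0}^{c-1} (-1)^(b+j) · (-b)^{\underline{j}} · v^(c-1-j) · u^(a+b-1+j) / (j! · (c-1-j)! · (a+b-1+j)!) = (1/(a+b+c-2)!) · Σ_{i=0}^{a+b-2} C(a+b+c-2, i) · C(a+b-2-i, b-1) · u^i · v^(a+b+c-2-i). -/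
open Finset

lemma key_nat (m j : ℕ) : (m + j) * ((m + j - 1).choose j) = ((m + j).choose (j+1)) * (j+1) := by
  rcases m with _ | m
  · rcases j with _ | j
    · simp
    · have h1 : 0 + (j+1) - 1 = j := by omega
      rw [h1, Nat.choose_eq_zero_of_lt (Nat.lt_succ_self j),
        Nat.choose_eq_zero_of_lt (by omega : 0 + (j+1) < j+1+1)]
      simp
  · have h := Nat.add_one_mul_choose_eq (m + j) j
    have h1 : m + 1 + j = (m + j) + 1 := by omega
    rw [h1, Nat.add_sub_cancel]
    exact h

lemma aux_descP (m j : ℕ) :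
    (descPochhammer ℝ j).eval (-(m : ℝ))
      = (-1 : ℝ) ^ j * (j.factorial : ℝ) * ((m + j - 1).choose j : ℝ) := by
  induction j with
  | zero => simp
  | succ j ih =>
    rw [descPochhammer_succ_eval, ih]
    have hm1 : m + (j+1) - 1 = m + j := by omega
    rw [hm1]
    have hkey : ((m:ℝ) + j) * ((m + j - 1).choose j : ℝ)
        = ((m + j).choose (j+1) : ℝ) * ((j:ℝ)+1) := by
      exact_mod_cast congrArg (Nat.cast : ℕ → ℝ) (key_nat m j)
    have hf : (((j+1).factorial : ℕ) : ℝ) = ((j:ℝ)+1) * (j.factorial : ℝ) := by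
      push_cast [Nat.factorial_succ]; ring
    rw [hf]
    linear_combination (-(-1:ℝ)^j * (j.factorial : ℝ)) * hkey

lemma core (c : ℕ) : ∀ M b : ℕ, 1 ≤ b →
    ∑ j ∈ range b, (-1:ℤ)^j * ((c+j-1).choose j : ℤ) * ((M.choose (b-1-j) : ℕ) : ℤ)
      = if c ≤ M then ((M-c).choose (b-1) : ℤ)
        else (-1:ℤ)^(b-1) * ((c - M + b - 2).choose (b-1) : ℤ) := by
  intro M
  induction M with
  | zero =>
    intro b hb
    obtain ⟨b', rfl⟩ : ∃ b', b = b' + 1 := ⟨b - 1, by omega⟩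
    rw [Finset.sum_range_succ]
    have hz : ∀ j ∈ range b', (-1:ℤ)^j * ((c+j-1).choose j : ℤ)
        * (((0:ℕ).choose (b'+1-1-j) : ℕ) : ℤ) = 0 := by
      intro j hj
      simp only [mem_range] at hj
      rw [Nat.choose_eq_zero_of_lt (by omega : (0:ℕ) < b'+1-1-j)]
      simp
    rw [Finset.sum_eq_zero hz, zero_add]
    by_cases hc : c ≤ 0
    · have hc0 : c = 0 := by omega
      subst hc0
      rw [if_pos le_rfl]
      rcases b' with _ | b''
      · simp
      · rw [Nat.choose_eq_zero_of_lt (by omega : (0:ℕ) < b''+1+1-1)]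
        simp
    · rw [if_neg (by omega : ¬ c ≤ 0)]
      rw [show c - 0 + (b'+1) - 2 = c + b' - 1 from by omega]
      simp
  | succ M ih =>
    intro b hb
    rcases b with _ | b
    · omega
    rcases b with _ | b'
    · simp
    have hsplit :
        ∑ j ∈ range (b'+2), (-1:ℤ)^j * ((c+j-1).choose j : ℤ) * (((M+1).choose (b'+2-1-j) : ℕ) : ℤ)
          = (∑ j ∈ range (b'+2), (-1:ℤ)^j * ((c+j-1).choose j : ℤ) * ((M.choose (b'+2-1-j) : ℕ) : ℤ))
          + ∑ j ∈ range (b'+1), (-1:ℤ)^j * ((c+j-1).choose j : ℤ) * ((M.choose (b'+1-1-j) : ℕ) : ℤ) := by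
      rw [Finset.sum_range_succ, Finset.sum_range_succ
        (f := fun j => (-1:ℤ)^j * ((c+j-1).choose j : ℤ) * ((M.choose (b'+2-1-j) : ℕ) : ℤ))]
      rw [show b'+2-1-(b'+1) = 0 from by omega]
      have hmid : ∀ j ∈ range (b'+1),
          (-1:ℤ)^j * ((c+j-1).choose j : ℤ) * (((M+1).choose (b'+2-1-j) : ℕ) : ℤ)
            = (-1:ℤ)^j * ((c+j-1).choose j : ℤ) * ((M.choose (b'+2-1-j) : ℕ) : ℤ)
            + (-1:ℤ)^j * ((c+j-1).choose j : ℤ) * ((M.choose (b'+1-1-j) : ℕ) : ℤ) := by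
        intro j hj
        simp only [mem_range] at hj
        have h1 : b'+2-1-j = (b'+1-1-j) + 1 := by omega
        rw [h1, Nat.choose_succ_succ]
        push_cast
        ring
      rw [Finset.sum_congr rfl hmid, Finset.sum_add_distrib,
        Nat.choose_zero_right, Nat.choose_zero_right]
      push_cast
      ring
    rw [hsplit, ih (b'+2) (by omega), ih (b'+1) (by omega)]
    by_cases h1 : c ≤ M
    · rw [if_pos h1, if_pos h1, if_pos (by omega : c ≤ M+1)]
      rw [show b'+2-1 = b'+1 from rfl, show b'+1-1 = b' from rfl,
        show M+1-c = (M-c)+1 from by omega, Nat.choose_succ_succ]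
      push_cast
      ring
    · by_cases h2 : c = M + 1
      · subst h2
        rw [if_neg h1, if_neg h1, if_pos le_rfl]
        rw [show b'+2-1 = b'+1 from rfl, show b'+1-1 = b' from rfl,
          show M+1-(M+1) = 0 from by omega,
          Nat.choose_eq_zero_of_lt (by omega : 0 < b'+1),
          show M+1-M+(b'+2)-2 = b'+1 from by omega,
          show M+1-M+(b'+1)-2 = b' from by omega,
          Nat.choose_self, Nat.choose_self]
        push_cast
        ring
      · rw [if_neg h1, if_neg h1, if_neg (by omega : ¬ c ≤ M+1)]
        rw [show b'+2-1 = b'+1 from rfl, show b'+1-1 = b' from rfl,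
          show c-(M+1)+(b'+2)-2 = c-M+b'-1 from by omega,
          show c-M+(b'+2)-2 = (c-M+b'-1)+1 from by omega,
          show c-M+(b'+1)-2 = c-M+b'-1 from by omega,
          Nat.choose_succ_succ]
        push_cast
        ring

/-- Equation (R1): closed form of the residue contribution `R₁ = R₁₁ + R₁₂` in the
volume formula for the K-moduli space of weighted line arrangements in `ℙ²`. -/
theorem stmt_10 (a b c : ℕ) (hb : 1 ≤ b) (hab : 1 ≤ a + b) (hac : 1 ≤ a + c) (u v : ℝ) :
    (∑ j ∈ Finset.range b,
        (descPochhammer ℝ j).eval (-(c : ℝ)) * (u + v) ^ (a + c - 1 + j) * v ^ (b - 1 - j)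
          / ((j.factorial : ℝ) * ((b - 1 - j).factorial : ℝ) * ((a + c - 1 + j).factorial : ℝ)))
      + (∑ j ∈ Finset.range c,
          (-1 : ℝ) ^ (b + j) * (descPochhammer ℝ j).eval (-(b : ℝ))
            * v ^ (c - 1 - j) * u ^ (a + b - 1 + j)
            / ((j.factorial : ℝ) * ((c - 1 - j).factorial : ℝ) * ((a + b - 1 + j).factorial : ℝ)))
      = (1 / ((a + b + c - 2).factorial : ℝ)) *
          ∑ i ∈ Finset.range (a + b - 1),
            ((a + b + c - 2).choose i : ℝ) * ((a + b - 2 - i).choose (b - 1) : ℝ)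
              * u ^ i * v ^ (a + b + c - 2 - i) := by
  set N := a + b + c - 2 with hN
  have hfac : ∀ n : ℕ, ((n.factorial : ℕ) : ℝ) ≠ 0 :=
    fun n => Nat.cast_ne_zero.mpr (Nat.factorial_ne_zero n)
  -- first sum
  have h1 : (∑ j ∈ Finset.range b,
        (descPochhammer ℝ j).eval (-(c : ℝ)) * (u + v) ^ (a + c - 1 + j) * v ^ (b - 1 - j)
          / ((j.factorial : ℝ) * ((b - 1 - j).factorial : ℝ) * ((a + c - 1 + j).factorial : ℝ)))
      = ∑ k ∈ Finset.range (N+1),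
          ((∑ j ∈ range b, (-1:ℤ)^j * ((c+j-1).choose j : ℤ) * (((N-k).choose (b-1-j) : ℕ) : ℤ) : ℤ) : ℝ)
            * (u ^ k * v ^ (N-k) / ((k.factorial : ℝ) * ((N-k).factorial : ℝ))) := by
    have hterm : ∀ j ∈ Finset.range b,
        (descPochhammer ℝ j).eval (-(c : ℝ)) * (u + v) ^ (a + c - 1 + j) * v ^ (b - 1 - j)
          / ((j.factorial : ℝ) * ((b - 1 - j).factorial : ℝ) * ((a + c - 1 + j).factorial : ℝ))
        = ∑ k ∈ Finset.range (N+1),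
            (((-1:ℤ)^j * ((c+j-1).choose j : ℤ) * (((N-k).choose (b-1-j) : ℕ) : ℤ) : ℤ) : ℝ)
              * (u ^ k * v ^ (N-k) / ((k.factorial : ℝ) * ((N-k).factorial : ℝ))) := by
      intro j hj
      simp only [mem_range] at hj
      have hee : (a + c - 1 + j) + (b - 1 - j) = N := by omega
      rw [aux_descP c j, add_pow u v (a + c - 1 + j), Finset.mul_sum, Finset.sum_mul,
        Finset.sum_div]
      rw [Finset.sum_subset (Finset.range_subset_range.mpr (by omega : a+c-1+j+1 ≤ N+1))
        (by
          intro k hk hk2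
          simp only [mem_range] at hk hk2
          rw [Nat.choose_eq_zero_of_lt (by omega : a+c-1+j < k)]
          simp)]
      refine Finset.sum_congr rfl ?_
      intro k hk
      simp only [mem_range] at hk
      by_cases hke : k ≤ a + c - 1 + j
      · have hv : v ^ (a+c-1+j-k) * v ^ (b-1-j) = v ^ (N-k) := by
          rw [← pow_add]; congr 1; omega
        have hA := Nat.choose_mul_factorial_mul_factorial (show b-1-j ≤ N-k by omega)
        have hB := Nat.choose_mul_factorial_mul_factorial hke
        have hkey : (((a+c-1+j).choose k : ℕ) : ℝ) * ((k.factorial : ℕ) : ℝ) * (((N-k).factorial : ℕ) : ℝ)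
            = (((N-k).choose (b-1-j) : ℕ) : ℝ) * (((b-1-j).factorial : ℕ) : ℝ) * (((a+c-1+j).factorial : ℕ) : ℝ) := by
          have h3 : (N-k) - (b-1-j) = a+c-1+j-k := by omega
          have hA' : ((N-k).choose (b-1-j)) * ((b-1-j).factorial) * ((a+c-1+j-k).factorial) = (N-k).factorial := by
            rw [← h3]; exact hA
          have hB' := hB
          push_cast [← hA', ← hB']
          ring
        rw [← mul_div_assoc,
          div_eq_div_iff
            (by exact mul_ne_zero (mul_ne_zero (hfac j) (hfac (b-1-j))) (hfac (a+c-1+j)))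
            (by exact mul_ne_zero (hfac k) (hfac (N-k)))]
        rw [← hv]
        push_cast
        linear_combination ((-1:ℝ)^j * (j.factorial : ℝ) * ((c+j-1).choose j : ℝ)
          * u^k * v^(a+c-1+j-k) * v^(b-1-j)) * hkey
      · rw [Nat.choose_eq_zero_of_lt (by omega : a+c-1+j < k),
          Nat.choose_eq_zero_of_lt (by omega : N-k < b-1-j)]
        simp
    rw [Finset.sum_congr rfl hterm, Finset.sum_comm]
    refine Finset.sum_congr rfl ?_
    intro k hk
    rw [← Finset.sum_mul]
    congr 1
    push_cast
    ring
  -- second sum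
  have h2 : (∑ j ∈ Finset.range c,
          (-1 : ℝ) ^ (b + j) * (descPochhammer ℝ j).eval (-(b : ℝ))
            * v ^ (c - 1 - j) * u ^ (a + b - 1 + j)
            / ((j.factorial : ℝ) * ((c - 1 - j).factorial : ℝ) * ((a + b - 1 + j).factorial : ℝ)))
      = ∑ k ∈ Finset.range (N+1),
          (((if a+b-1 ≤ k then (-1:ℤ)^b * (((b-1+(k-(a+b-1))).choose (b-1) : ℕ) : ℤ) else 0) : ℤ) : ℝ)
            * (u ^ k * v ^ (N-k) / ((k.factorial : ℝ) * ((N-k).factorial : ℝ))) := by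
    conv_rhs => rw [Finset.range_eq_Ico,
      ← Finset.sum_subset (Finset.Ico_subset_Ico (Nat.zero_le _) le_rfl :
          Finset.Ico (a+b-1) (N+1) ⊆ Finset.Ico 0 (N+1))
        (by
          intro k hk hk2
          simp only [Finset.mem_Ico] at hk hk2
          rw [if_neg (by omega : ¬ a+b-1 ≤ k)]
          simp),
      Finset.sum_Ico_eq_sum_range,
      show N+1-(a+b-1) = c from by omega]
    refine Finset.sum_congr rfl ?_
    intro t ht
    simp only [mem_range] at ht
    rw [if_pos (by omega : a+b-1 ≤ a+b-1+t)]
    rw [show a+b-1+t-(a+b-1) = t from by omega]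
    rw [show N-(a+b-1+t) = c-1-t from by omega]
    rw [aux_descP b t]
    rw [show b-1+t = b+t-1 from by omega]
    rw [show b-1 = (b+t-1)-t from by omega, Nat.choose_symm (by omega : t ≤ b+t-1)]
    have hsgn : (-1:ℝ)^(b+t) * (-1:ℝ)^t = (-1:ℝ)^b := by
      rw [← pow_add, show b+t+t = b+2*t from by ring, pow_add, pow_mul]
      norm_num
    rw [← mul_div_assoc,
      div_eq_div_iff
        (by exact mul_ne_zero (mul_ne_zero (hfac t) (hfac (c-1-t))) (hfac (a+b-1+t)))
        (by exact mul_ne_zero (hfac (a+b-1+t)) (hfac (c-1-t)))]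
    push_cast
    linear_combination ((t.factorial : ℝ) * ((b+t-1).choose t : ℝ) * v^(c-1-t) * u^(a+b-1+t)
      * ((a+b-1+t).factorial : ℝ) * ((c-1-t).factorial : ℝ)) * hsgn
  -- right-hand side
  have h3 : (1 / ((N).factorial : ℝ)) *
          (∑ i ∈ Finset.range (a + b - 1),
            ((N).choose i : ℝ) * ((a + b - 2 - i).choose (b - 1) : ℝ)
              * u ^ i * v ^ (N - i))
      = ∑ k ∈ Finset.range (N+1),
          (((if k < a+b-1 then (((a+b-2-k).choose (b-1) : ℕ) : ℤ) else 0) : ℤ) : ℝ)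
            * (u ^ k * v ^ (N-k) / ((k.factorial : ℝ) * ((N-k).factorial : ℝ))) := by
    rw [← Finset.sum_subset (Finset.range_subset_range.mpr (by omega : a+b-1 ≤ N+1))
      (by
        intro k hk hk2
        simp only [mem_range] at hk hk2
        rw [if_neg (by omega : ¬ k < a+b-1)]
        simp)]
    rw [Finset.mul_sum]
    refine Finset.sum_congr rfl ?_
    intro i hi
    simp only [mem_range] at hi
    rw [if_pos hi]
    have hNfac : ((N.choose i : ℕ) : ℝ) * ((i.factorial : ℕ) : ℝ) * (((N-i).factorial : ℕ) : ℝ)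
        = ((N.factorial : ℕ) : ℝ) := by
      exact_mod_cast congrArg (Nat.cast : ℕ → ℝ)
        (Nat.choose_mul_factorial_mul_factorial (by omega : i ≤ N))
    rw [one_div, inv_mul_eq_div, ← mul_div_assoc,
      div_eq_div_iff (hfac N) (by exact mul_ne_zero (hfac i) (hfac (N-i)))]
    push_cast
    linear_combination (((a+b-2-i).choose (b-1) : ℝ) * u^i * v^(N-i)) * hNfac
  rw [h1, h2, h3, ← Finset.sum_add_distrib]
  refine Finset.sum_congr rfl ?_
  intro k hk
  simp only [mem_range] at hk
  rw [← add_mul]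
  congr 1
  rw [core c (N-k) b hb]
  by_cases hk1 : k < a+b-1
  · rw [if_pos (by omega : c ≤ N-k), if_neg (by omega : ¬ a+b-1 ≤ k), if_pos hk1,
      show N-k-c = a+b-2-k from by omega]
    push_cast
    ring
  · rw [if_neg (by omega : ¬ c ≤ N-k), if_pos (by omega : a+b-1 ≤ k), if_neg hk1,
      show c-(N-k)+b-2 = b-1+(k-(a+b-1)) from by omega]
    obtain ⟨b', rfl⟩ : ∃ b', b = b' + 1 := ⟨b - 1, by omega⟩
    rw [show b'+1-1 = b' from rfl]
    push_cast
    ring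
end

section
/- Let a, b, c be natural numbers with a ≥ 1, b ≥ 1 and a+c ≥ 1, and let u, v be real numbers. Then Σ_{j=0}^{b-1} (-c)^{\underline{j}} · u^(a+c-1+j) · (u+v)^(b-1-j) / (j! · (b-1-j)! · (a+c-1+j)!) = (1/(a+b+c-2)!) · Σ_{i=0}^{b-1} C(a+b+c-2, i) · C(a+b-2-i, a-1) · u^(a+b+c-2-i) · v^i. -/
open Finset

open Polynomial in
private lemma r2_desc_smeval_eq_eval (x : ℝ) (n : ℕ) :
    (descPochhammer ℤ n).smeval x = (descPochhammer ℝ n).eval x := by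
  induction n with
  | zero => simp [smeval_one]
  | succ n ih =>
    rw [descPochhammer_succ_right, descPochhammer_succ_right, smeval_mul, eval_mul, ih]
    congr 1
    simp [smeval_sub, smeval_X, smeval_natCast]

private lemma r2_desc_eq_choose (c j : ℕ) :
    (descPochhammer ℝ j).eval (-(c:ℝ)) = (j.factorial : ℝ) * Ring.choose (-(c:ℝ)) j := by
  rw [← r2_desc_smeval_eq_eval, Ring.descPochhammer_eq_factorial_smul_choose, nsmul_eq_mul]

private lemma r2_key' (A c n : ℕ) :
    ∑ j ∈ range (n+1), Ring.choose (-(c:ℝ)) j * ((A+c+n).choose (n-j) : ℝ)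
      = ((A+n).choose n : ℝ) := by
  have h := Ring.add_choose_eq (r := -(c:ℝ)) (s := ((A+c+n : ℕ) : ℝ)) n (Commute.all _ _)
  have h2 : -(c:ℝ) + ((A+c+n : ℕ) : ℝ) = ((A+n : ℕ) : ℝ) := by push_cast; ring
  rw [h2, Ring.choose_natCast] at h
  rw [h, Finset.Nat.sum_antidiagonal_eq_sum_range_succ
    (fun i j => Ring.choose (-(c:ℝ)) i * Ring.choose ((A+c+n:ℕ):ℝ) j)]
  exact sum_congr rfl fun j _ => by rw [Ring.choose_natCast]

private lemma r2_key (A c n : ℕ) :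
    ∑ j ∈ range (n+1),
        (descPochhammer ℝ j).eval (-(c:ℝ))
          / ((j.factorial : ℝ) * ((n-j).factorial : ℝ) * ((A+c+j).factorial : ℝ))
      = ((A+n).choose n : ℝ) / ((A+c+n).factorial : ℝ) := by
  rw [eq_div_iff (by exact_mod_cast Nat.factorial_ne_zero _), ← r2_key' A c n, Finset.sum_mul]
  refine sum_congr rfl fun j hj => ?_
  have hj' : j ≤ n := Nat.lt_succ_iff.mp (mem_range.mp hj)
  rw [r2_desc_eq_choose]
  have hfact : ((A+c+n).choose (n-j) : ℝ) * ((n-j).factorial : ℝ) * ((A+c+j).factorial : ℝ)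
      = ((A+c+n).factorial : ℝ) := by
    have h1 : n - j ≤ A + c + n := by omega
    have := Nat.choose_mul_factorial_mul_factorial h1
    rw [show A + c + n - (n - j) = A + c + j by omega] at this
    exact_mod_cast this
  have h0 : (j.factorial : ℝ) ≠ 0 := by exact_mod_cast Nat.factorial_ne_zero _
  have h1 : ((n-j).factorial : ℝ) ≠ 0 := by exact_mod_cast Nat.factorial_ne_zero _
  have h2 : ((A+c+j).factorial : ℝ) ≠ 0 := by exact_mod_cast Nat.factorial_ne_zero _
  field_simp
  linear_combination (-(Ring.choose (-(c:ℝ)) j)) * hfact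

private lemma r2_per_i (A c n i : ℕ) (u v : ℝ) :
    ∑ j ∈ range (n+1),
        (descPochhammer ℝ j).eval (-(c:ℝ)) * u ^ (A+c+j) *
            (v ^ i * u ^ (n-j) * (((n-j)+i).choose i : ℝ))
          / ((j.factorial : ℝ) * (((n-j)+i).factorial : ℝ) * ((A+c+j).factorial : ℝ))
      = (1 / ((A+c+n+i).factorial : ℝ)) *
          (((A+c+n+i).choose i : ℝ) * ((A+n).choose A : ℝ) * u ^ (A+c+n) * v ^ i) := by
  have step1 : ∀ j ∈ range (n+1),
      (descPochhammer ℝ j).eval (-(c:ℝ)) * u ^ (A+c+j) *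
            (v ^ i * u ^ (n-j) * (((n-j)+i).choose i : ℝ))
          / ((j.factorial : ℝ) * (((n-j)+i).factorial : ℝ) * ((A+c+j).factorial : ℝ))
      = (v ^ i * u ^ (A+c+n) / (i.factorial : ℝ)) *
          ((descPochhammer ℝ j).eval (-(c:ℝ))
            / ((j.factorial : ℝ) * ((n-j).factorial : ℝ) * ((A+c+j).factorial : ℝ))) := by
    intro j hj
    have hjn : j ≤ n := Nat.lt_succ_iff.mp (mem_range.mp hj)
    have hu : u ^ (A+c+j) * u ^ (n-j) = u ^ (A+c+n) := by
      rw [← pow_add]; congr 1; omega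
    have hch : ((((n-j)+i).choose i : ℕ) : ℝ) * (i.factorial : ℝ) * ((n-j).factorial : ℝ)
        = ((((n-j)+i).factorial : ℕ) : ℝ) := by
      have := Nat.choose_mul_factorial_mul_factorial (Nat.le_add_left i (n-j))
      rw [Nat.add_sub_cancel] at this
      exact_mod_cast this
    have h0 : (j.factorial : ℝ) ≠ 0 := by exact_mod_cast Nat.factorial_ne_zero _
    have h1 : ((n-j).factorial : ℝ) ≠ 0 := by exact_mod_cast Nat.factorial_ne_zero _
    have h2 : ((A+c+j).factorial : ℝ) ≠ 0 := by exact_mod_cast Nat.factorial_ne_zero _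
    have h3 : ((((n-j)+i)).factorial : ℝ) ≠ 0 := by exact_mod_cast Nat.factorial_ne_zero _
    have h4 : (i.factorial : ℝ) ≠ 0 := by exact_mod_cast Nat.factorial_ne_zero _
    have hCval : ((((n-j)+i).choose i : ℕ) : ℝ)
        = ((((n-j)+i).factorial : ℕ) : ℝ) / ((i.factorial : ℝ) * ((n-j).factorial : ℝ)) := by
      rw [eq_div_iff (by positivity)]
      linear_combination hch
    rw [hCval, ← hu]
    field_simp
  rw [Finset.sum_congr rfl step1, ← Finset.mul_sum, r2_key A c n]
  have hsymm : (A+n).choose A = (A+n).choose n := by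
    rw [← Nat.choose_symm (Nat.le_add_left n A)]
    congr 1; omega
  have hch2 : (((A+c+n+i).choose i : ℕ) : ℝ) * (i.factorial : ℝ) * ((A+c+n).factorial : ℝ)
      = (((A+c+n+i).factorial : ℕ) : ℝ) := by
    have := Nat.choose_mul_factorial_mul_factorial (Nat.le_add_left i (A+c+n))
    rw [Nat.add_sub_cancel] at this
    exact_mod_cast this
  have h4 : (i.factorial : ℝ) ≠ 0 := by exact_mod_cast Nat.factorial_ne_zero _
  have h5 : ((A+c+n).factorial : ℝ) ≠ 0 := by exact_mod_cast Nat.factorial_ne_zero _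
  have h6 : ((A+c+n+i).factorial : ℝ) ≠ 0 := by exact_mod_cast Nat.factorial_ne_zero _
  rw [hsymm]
  field_simp
  linear_combination (-(v ^ i * u ^ (A+c+n) * ((A+n).choose n : ℝ))) * hch2

private lemma r2_main (A B c : ℕ) (u v : ℝ) :
    ∑ j ∈ range (B+1),
        (descPochhammer ℝ j).eval (-(c:ℝ)) * u ^ (A+c+j) * (u+v) ^ (B-j)
          / ((j.factorial : ℝ) * ((B-j).factorial : ℝ) * ((A+c+j).factorial : ℝ))
      = (1 / ((A+B+c).factorial : ℝ)) *
          ∑ i ∈ range (B+1),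
            ((A+B+c).choose i : ℝ) * ((A+B-i).choose A : ℝ) * u ^ (A+B+c-i) * v ^ i := by
  have hexp : ∑ j ∈ range (B+1),
        (descPochhammer ℝ j).eval (-(c:ℝ)) * u ^ (A+c+j) * (u+v) ^ (B-j)
          / ((j.factorial : ℝ) * ((B-j).factorial : ℝ) * ((A+c+j).factorial : ℝ))
      = ∑ j ∈ range (B+1), ∑ k ∈ range ((B-j)+1),
          (descPochhammer ℝ j).eval (-(c:ℝ)) * u ^ (A+c+j) *
              (v ^ k * u ^ ((B-j)-k) * ((B-j).choose k : ℝ))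
            / ((j.factorial : ℝ) * ((B-j).factorial : ℝ) * ((A+c+j).factorial : ℝ)) := by
    refine sum_congr rfl fun j hj => ?_
    rw [show u + v = v + u from add_comm u v, add_pow, Finset.mul_sum, Finset.sum_div]
  rw [hexp, Finset.sum_comm' (t' := range (B+1)) (s' := fun k => range ((B-k)+1))
      (by intro x y; simp only [mem_range]; omega), Finset.mul_sum]
  refine sum_congr rfl fun i hi => ?_
  have hiB : i ≤ B := Nat.lt_succ_iff.mp (mem_range.mp hi)
  obtain ⟨n, rfl⟩ : ∃ n, B = n + i := ⟨B - i, by omega⟩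
  have e0 : n + i - i = n := by omega
  have heq : ∀ j ∈ range (n+1),
      (descPochhammer ℝ j).eval (-(c:ℝ)) * u ^ (A+c+j) *
          (v ^ i * u ^ ((n+i-j)-i) * ((n+i-j).choose i : ℝ))
        / ((j.factorial : ℝ) * ((n+i-j).factorial : ℝ) * ((A+c+j).factorial : ℝ))
      = (descPochhammer ℝ j).eval (-(c:ℝ)) * u ^ (A+c+j) *
          (v ^ i * u ^ (n-j) * (((n-j)+i).choose i : ℝ))
        / ((j.factorial : ℝ) * (((n-j)+i).factorial : ℝ) * ((A+c+j).factorial : ℝ)) := by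
    intro j hj
    have hjn : j ≤ n := Nat.lt_succ_iff.mp (mem_range.mp hj)
    rw [show n + i - j = (n-j) + i by omega, show (n-j) + i - i = n - j by omega]
  rw [e0, Finset.sum_congr rfl heq, r2_per_i A c n i u v,
    show A + (n+i) + c = A + c + n + i by ring, show A + c + n + i - i = A + c + n by omega,
    show A + (n+i) - i = A + n by omega]

/-- Equation (R2): closed form of the residue contribution `R₂` in the volume
formula for the K-moduli space of weighted line arrangements in `ℙ²`. -/
theorem stmt_11 (a b c : ℕ) (ha : 1 ≤ a) (hb : 1 ≤ b) (hac : 1 ≤ a + c) (u v : ℝ) :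
    ∑ j ∈ Finset.range b,
        (descPochhammer ℝ j).eval (-(c : ℝ)) * u ^ (a + c - 1 + j) * (u + v) ^ (b - 1 - j)
          / ((j.factorial : ℝ) * ((b - 1 - j).factorial : ℝ) * ((a + c - 1 + j).factorial : ℝ))
      = (1 / ((a + b + c - 2).factorial : ℝ)) *
          ∑ i ∈ Finset.range b,
            ((a + b + c - 2).choose i : ℝ) * ((a + b - 2 - i).choose (a - 1) : ℝ)
              * u ^ (a + b + c - 2 - i) * v ^ i := by
  obtain ⟨A, rfl⟩ : ∃ A, a = A + 1 := ⟨a - 1, by omega⟩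
  obtain ⟨B, rfl⟩ : ∃ B, b = B + 1 := ⟨b - 1, by omega⟩
  simp only [show A + 1 + c - 1 = A + c by omega, show B + 1 - 1 = B by omega,
    show A + 1 + (B + 1) + c - 2 = A + B + c by omega,
    show A + 1 + (B + 1) - 2 = A + B by omega, show A + 1 - 1 = A by omega]
  exact r2_main A B c u v
end
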